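/- The dimension function # is monotone under subexpression replacement: for any one-hole expression context C and expressions e, e', if #(e) ⊑ #(e') in the flat lattice N⊥⊤ then #(C[e]) ⊑ #(C[e']). -/
import Mathlib


inductive Flat where
  | bot
  | lift (n : ℕ)
  | top
deriving DecidableEq

namespace Flat

/-- The flat order: reflexive closure of `⊥ ⊑ lift n` and `lift n ⊑ ⊤`. -/
def le : Flat → Flat → Prop
  | .bot, _ => True
  | _, .top => True
  | .lift m, .lift n => m = n
  | _, _ => False

/-- Join in the flat lattice. -/
def sup : Flat → Flat → Flat
  | .bot, x => x
  | x, .bot => x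
  | .top, _ => .top
  | _, .top => .top
  | .lift m, .lift n => if m = n then .lift m else .top

/-- Meet in the flat lattice. -/
def inf : Flat → Flat → Flat
  | .top, x => x
  | x, .top => x
  | .bot, _ => .bot
  | _, .bot => .bot
  | .lift m, .lift n => if m = n then .lift m else .bot

end Flat
/-- `leb d (lift 1)` etc.: boolean version of the flat order. -/
def Flat.leb : Flat → Flat → Bool
  | .bot, _ => true
  | _, .top => true
  | .lift m, .lift n => m == n
  | _, _ => false

/-- `d ⊑ lift m` for some `m ≥ n`. -/
def Flat.atLeast (d : Flat) (n : ℕ) : Bool :=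
  match d with
  | .bot => true
  | .lift m => decide (n ≤ m)
  | .top => false

/-- epsilon0 expressions (handles omitted: they are immaterial for dimensions). -/
inductive Expr where
  | var (x : ℕ)
  | const (c : ℤ)
  | bundle (items : List Expr)
  | letE (vars : List ℕ) (bound : Expr) (body : Expr)
  | call (f : ℕ) (args : List Expr)
  | prim (p : ℕ) (args : List Expr)
  | ifE (disc : Expr) (cases : List ℤ) (thenB : Expr) (elseB : Expr)
  | fork (f : ℕ) (args : List Expr)
  | joinE (e : Expr)

/-- In- and out-dimensions of procedures and primitives. -/
structure Env where
  procOut : ℕ → Flat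
  procArity : ℕ → ℕ
  primOut : ℕ → ℕ
  primArity : ℕ → ℕ

/-- The (total extension of the) dimension function `#`. -/
def dim (Γ : Env) : Expr → Flat
  | .var _ => .lift 1
  | .const _ => .lift 1
  | .bundle items =>
      if items.attach.all (fun ⟨e, _⟩ => Flat.leb (dim Γ e) (.lift 1)) then
        .lift items.length
      else .top
  | .letE vars bound body =>
      if Flat.atLeast (dim Γ bound) vars.length ∧ dim Γ body ≠ .top then
        dim Γ body
      else .top
  | .call f args =>
      if args.length = Γ.procArity f ∧
         (args.attach.all fun ⟨e, _⟩ => Flat.leb (dim Γ e) (.lift 1)) ∧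
         Γ.procOut f ≠ .top then
        Γ.procOut f
      else .top
  | .prim p args =>
      if args.length = Γ.primArity p ∧
         (args.attach.all fun ⟨e, _⟩ => Flat.leb (dim Γ e) (.lift 1)) then
        .lift (Γ.primOut p)
      else .top
  | .ifE d _ t e =>
      if Flat.leb (dim Γ d) (.lift 1) ∧ Flat.sup (dim Γ t) (dim Γ e) ≠ .top then
        Flat.sup (dim Γ t) (dim Γ e)
      else .top
  | .fork f args =>
      if args.length = Γ.procArity f ∧
         (args.attach.all fun ⟨e, _⟩ => Flat.leb (dim Γ e) (.lift 1)) ∧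
         Flat.leb (Γ.procOut f) (.lift 1) then
        .lift 1
      else .top
  | .joinE e =>
      if Flat.leb (dim Γ e) (.lift 1) then .lift 1 else .top
/-- One-hole expression contexts. -/
inductive Ctx where
  | hole
  | bundle (pre : List Expr) (c : Ctx) (post : List Expr)
  | letBound (vars : List ℕ) (c : Ctx) (body : Expr)
  | letBody (vars : List ℕ) (bound : Expr) (c : Ctx)
  | call (f : ℕ) (pre : List Expr) (c : Ctx) (post : List Expr)
  | prim (p : ℕ) (pre : List Expr) (c : Ctx) (post : List Expr)
  | ifDisc (c : Ctx) (cases : List ℤ) (t e : Expr)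
  | ifThen (d : Expr) (cases : List ℤ) (c : Ctx) (e : Expr)
  | ifElse (d : Expr) (cases : List ℤ) (t : Expr) (c : Ctx)
  | fork (f : ℕ) (pre : List Expr) (c : Ctx) (post : List Expr)
  | joinE (c : Ctx)

/-- Filling the hole of a context with an expression. -/
def Ctx.fill : Ctx → Expr → Expr
  | .hole, e => e
  | .bundle pre c post, e => .bundle (pre ++ [c.fill e] ++ post)
  | .letBound vs c body, e => .letE vs (c.fill e) body
  | .letBody vs b c, e => .letE vs b (c.fill e)
  | .call f pre c post, e => .call f (pre ++ [c.fill e] ++ post)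
  | .prim p pre c post, e => .prim p (pre ++ [c.fill e] ++ post)
  | .ifDisc c cs t el, e => .ifE (c.fill e) cs t el
  | .ifThen d cs c el, e => .ifE d cs (c.fill e) el
  | .ifElse d cs t c, e => .ifE d cs t (c.fill e)
  | .fork f pre c post, e => .fork f (pre ++ [c.fill e] ++ post)
  | .joinE c, e => .joinE (c.fill e)

lemma Flat.le_top (x : Flat) : Flat.le x .top := by cases x <;> trivial

lemma Flat.le_refl (x : Flat) : Flat.le x x := by cases x <;> simp [Flat.le]

lemma Flat.leb_mono {a b : Flat} (h : Flat.le a b) (hb : b.leb (.lift 1) = true) :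
    a.leb (.lift 1) = true := by
  cases a <;> cases b <;> simp_all [Flat.le, Flat.leb]

lemma Flat.atLeast_mono {a b : Flat} {n : ℕ} (h : Flat.le a b) (hb : b.atLeast n = true) :
    a.atLeast n = true := by
  cases a <;> cases b <;> simp_all [Flat.le, Flat.atLeast]

lemma Flat.le_sup_right (x y : Flat) : Flat.le x (Flat.sup y x) := by
  cases y <;> cases x <;> simp only [Flat.sup] <;>
    first
      | exact Flat.le_refl _
      | exact Flat.le_top _
      | trivial
      | (split <;> simp [Flat.le] <;> omega)

lemma Flat.le_sup_left (x y : Flat) : Flat.le x (Flat.sup x y) := by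
  cases y <;> cases x <;> simp only [Flat.sup] <;>
    first
      | exact Flat.le_refl _
      | exact Flat.le_top _
      | trivial
      | (split <;> simp [Flat.le] <;> omega)

lemma Flat.bot_sup (x : Flat) : Flat.sup .bot x = x := by cases x <;> rfl
lemma Flat.sup_bot (x : Flat) : Flat.sup x .bot = x := by cases x <;> rfl
lemma Flat.top_sup (x : Flat) : Flat.sup .top x = .top := by cases x <;> rfl
lemma Flat.sup_top (x : Flat) : Flat.sup x .top = .top := by cases x <;> rfl

lemma Flat.sup_mono_left {a b : Flat} (x : Flat) (h : Flat.le a b) :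
    Flat.le (a.sup x) (b.sup x) := by
  cases a with
  | bot => rw [Flat.bot_sup]; exact Flat.le_sup_right x b
  | lift m =>
      cases b with
      | bot => exact absurd h (by simp [Flat.le])
      | lift n => obtain rfl : m = n := h; exact Flat.le_refl _
      | top => rw [Flat.top_sup]; exact Flat.le_top _
  | top =>
      cases b with
      | bot => exact absurd h (by simp [Flat.le])
      | lift n => exact absurd h (by simp [Flat.le])
      | top => exact Flat.le_refl _

lemma Flat.sup_mono_right {a b : Flat} (x : Flat) (h : Flat.le a b) :
    Flat.le (x.sup a) (x.sup b) := by
  cases a with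
  | bot => rw [Flat.sup_bot]; exact Flat.le_sup_left x b
  | lift m =>
      cases b with
      | bot => exact absurd h (by simp [Flat.le])
      | lift n => obtain rfl : m = n := h; exact Flat.le_refl _
      | top => rw [Flat.sup_top]; exact Flat.le_top _
  | top =>
      cases b with
      | bot => exact absurd h (by simp [Flat.le])
      | lift n => exact absurd h (by simp [Flat.le])
      | top => exact Flat.le_refl _

lemma Flat.ne_top_of_le {a b : Flat} (h : Flat.le a b) (hb : b ≠ .top) : a ≠ .top := by
  cases a <;> cases b <;> simp_all [Flat.le]

/-- A generic monotonicity helper for `if Q ∧ v ≠ ⊤ then v else ⊤` shapes. -/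
lemma Flat.ite_ne_top_mono (Q : Prop) [Decidable Q] {v v' : Flat} (h : Flat.le v v') :
    Flat.le (if Q ∧ v ≠ .top then v else .top) (if Q ∧ v' ≠ .top then v' else .top) := by
  split_ifs with h1 h2 h2
  · exact h
  · exact Flat.le_top _
  · exact absurd ⟨h2.1, Flat.ne_top_of_le h h2.2⟩ h1
  · exact Flat.le_top _

/-- the dimension function is monotone under subexpression
replacement. -/
theorem dim_monotone (Γ : Env) (C : Ctx) (e e' : Expr)
    (h : Flat.le (dim Γ e) (dim Γ e')) :
    Flat.le (dim Γ (C.fill e)) (dim Γ (C.fill e')) := by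
  have key : ∀ (a b : Expr),
      ((dim Γ b).leb (.lift 1) = true → (dim Γ a).leb (.lift 1) = true) →
      ∀ (l1 l2 : List Expr),
      ((l1 ++ [b] ++ l2).attach.all fun x => (dim Γ x.1).leb (.lift 1)) = true →
      ((l1 ++ [a] ++ l2).attach.all fun x => (dim Γ x.1).leb (.lift 1)) = true := by
    intro a b hab l1 l2 hb
    simp only [List.all_eq_true, List.mem_attach, true_implies, Subtype.forall,
      List.mem_append, List.mem_singleton] at hb ⊢
    intro x hx
    rcases hx with (hx | rfl) | hx
    · exact hb x (Or.inl (Or.inl hx))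
    · exact hab (hb _ (Or.inl (Or.inr rfl)))
    · exact hb x (Or.inr hx)
  induction C with
  | hole => exact h
  | bundle pre c post ih =>
      simp only [Ctx.fill, dim]
      split_ifs with h1 h2 h2
      · simp [Flat.le]
      · exact Flat.le_top _
      · exact absurd (key _ _ (Flat.leb_mono ih) pre post h2) h1
      · exact Flat.le_top _
  | letBound vs c body ih =>
      simp only [Ctx.fill, dim]
      split_ifs with h1 h2 h2
      · exact Flat.le_refl _
      · exact Flat.le_top _
      · exact absurd ⟨Flat.atLeast_mono ih h2.1, h2.2⟩ h1
      · exact Flat.le_top _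
  | letBody vs bnd c ih =>
      simp only [Ctx.fill, dim]
      exact Flat.ite_ne_top_mono _ ih
  | call f pre c post ih =>
      simp only [Ctx.fill, dim]
      have hlen : (pre ++ [c.fill e] ++ post).length = (pre ++ [c.fill e'] ++ post).length := by
        simp
      split_ifs with h1 h2 h2
      · exact Flat.le_refl _
      · exact Flat.le_top _
      · exact absurd ⟨hlen.trans h2.1, key _ _ (Flat.leb_mono ih) pre post h2.2.1, h2.2.2⟩ h1
      · exact Flat.le_top _
  | prim p pre c post ih =>
      simp only [Ctx.fill, dim]
      have hlen : (pre ++ [c.fill e] ++ post).length = (pre ++ [c.fill e'] ++ post).length := by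
        simp
      split_ifs with h1 h2 h2
      · exact Flat.le_refl _
      · exact Flat.le_top _
      · exact absurd ⟨hlen.trans h2.1, key _ _ (Flat.leb_mono ih) pre post h2.2⟩ h1
      · exact Flat.le_top _
  | ifDisc c cs t el ih =>
      simp only [Ctx.fill, dim]
      split_ifs with h1 h2 h2
      · exact Flat.le_refl _
      · exact Flat.le_top _
      · exact absurd ⟨Flat.leb_mono ih h2.1, h2.2⟩ h1
      · exact Flat.le_top _
  | ifThen d cs c el ih =>
      simp only [Ctx.fill, dim]
      exact Flat.ite_ne_top_mono _ (Flat.sup_mono_left _ ih)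
  | ifElse d cs t c ih =>
      simp only [Ctx.fill, dim]
      exact Flat.ite_ne_top_mono _ (Flat.sup_mono_right _ ih)
  | fork f pre c post ih =>
      simp only [Ctx.fill, dim]
      have hlen : (pre ++ [c.fill e] ++ post).length = (pre ++ [c.fill e'] ++ post).length := by
        simp
      split_ifs with h1 h2 h2
      · exact Flat.le_refl _
      · exact Flat.le_top _
      · exact absurd ⟨hlen.trans h2.1, key _ _ (Flat.leb_mono ih) pre post h2.2.1, h2.2.2⟩ h1
      · exact Flat.le_top _
  | joinE c ih =>
      simp only [Ctx.fill, dim]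
      split_ifs with h1 h2 h2
      · exact Flat.le_refl _
      · exact Flat.le_top _
      · exact absurd (Flat.leb_mono ih h2) h1
      · exact Flat.le_top _
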